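/- Every complete first-order theory T of an infinite Boolean algebra is k-independent for every k ≥ 1; the formula φ(x, y_0, …, y_{k-1}) := (y_0 ∩ y_1 ∩ ⋯ ∩ y_{k-1} ≤ x) witnesses this. In particular, for k = 2 and any n, if ⟨a_{i,j} : i,j < n⟩ are pairwise disjoint non-zero elements of a Boolean algebra, b_i := ⋃{a_{i,j} : j < n} and c_j := ⋃{a_{i,j} : i < n}, then the formulas ⟨φ(x, b_i, c_j) : i,j < n⟩ form an independent sequence: for each u ⊆ n × n the element a_u := ⋃{a_{i,j} : (i,j) ∈ u} realizes {φ(x,b_i,c_j)^{if((i,j)∈u)} : i,j < n}. -/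

import Mathlib

open FirstOrder Cardinal Set

universe u

namespace Paper886

section Basic

variable (L : FirstOrder.Language.{u, u}) (M : Type u) [L.Structure M]

/-- A first-order formula in `n` object variables together with a finite tuple of
parameters from `M`. -/
structure ParamFormula (n : ℕ) : Type u where
  m : ℕ
  toFormula : L.Formula (Fin n ⊕ Fin m)
  params : Fin m → M

variable {L M}

/-- Realization of a parametrized formula at a tuple. -/
def ParamFormula.Realize {n : ℕ} (f : ParamFormula L M n) (v : Fin n → M) : Prop :=
  f.toFormula.Realize (Sum.elim v f.params)

/-- The parameters of `f` all lie in `B`. -/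
def ParamFormula.paramsIn {n : ℕ} (f : ParamFormula L M n) (B : Set M) : Prop :=
  ∀ i, f.params i ∈ B

/-- The set of realizations of a partial 1-type. -/
def realizeSet (p : Set (ParamFormula L M 1)) : Set M :=
  {a | ∀ f ∈ p, f.Realize fun _ => a}

/-- The partial type `p` is over the parameter set `B`. -/
def IsTypeOver (p : Set (ParamFormula L M 1)) (B : Set M) : Prop :=
  ∀ f ∈ p, f.paramsIn B

variable (L) in
/-- Two tuples realize the same type over a set `A` of parameters. -/
def SameType {α : Type u} (A : Set M) (a b : α → M) : Prop :=
  ∀ (n mp : ℕ) (φ : L.Formula (Fin n ⊕ Fin mp)) (vs : Fin n → α) (ps : Fin mp → M),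
    (∀ i, ps i ∈ A) →
      (φ.Realize (Sum.elim (fun i => a (vs i)) ps) ↔ φ.Realize (Sum.elim (fun i => b (vs i)) ps))

variable (L M)

/-- `M` is `κ`-saturated: every finitely satisfiable 1-type over fewer than `κ`
parameters is realized in `M`. -/
def Saturated (κ : Cardinal.{u}) : Prop :=
  ∀ B : Set M, #B < κ → ∀ p : Set (ParamFormula L M 1), IsTypeOver p B →
    (∀ s : Set (ParamFormula L M 1), s ⊆ p → s.Finite → ∃ a : M, ∀ f ∈ s, f.Realize fun _ => a) →
    ∃ a : M, a ∈ realizeSet p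

/-- `Th(M)` is dependent (NIP): no formula has the independence property, where consistency
of a pattern is rendered as finite satisfiability in the (saturated) monster. -/
def IsDependent : Prop :=
  ∀ (nx np : ℕ) (φ : L.Formula (Fin nx ⊕ Fin np)) (a : ℕ → Fin np → M),
    ¬ ∀ (u : Set ℕ) (s : Finset ℕ), ∃ x : Fin nx → M,
        ∀ i ∈ s, (φ.Realize (Sum.elim x (a i)) ↔ i ∈ u)

variable {L M}

/-- The cardinality `|T|` of the (complete) theory of `M`. -/
noncomputable def theoryCard (L : FirstOrder.Language.{u, u}) : Cardinal.{u} :=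
  ℵ₀ ⊔ L.card

variable (L M)

/-- A type-definable group: a partial type `p*` over `A*` together with definitions
(over `A*`) of the group operations making `p*(𝔠)` a group. -/
structure DefGroup : Type u where
  AStar : Set M
  pStar : Set (ParamFormula L M 1)
  pStar_over : IsTypeOver pStar AStar
  mul : M → M → M
  inv : M → M
  one : M
  mul_definable : ∃ φ : ParamFormula L M 3, φ.paramsIn AStar ∧
    ∀ x y z : M, (φ.Realize ![x, y, z] ↔ mul x y = z)
  inv_definable : ∃ φ : ParamFormula L M 2, φ.paramsIn AStar ∧
    ∀ x y : M, (φ.Realize ![x, y] ↔ inv x = y)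
  one_definable : ∃ φ : ParamFormula L M 1, φ.paramsIn AStar ∧
    ∀ x : M, (φ.Realize ![x] ↔ x = one)
  one_mem' : one ∈ realizeSet pStar
  mul_mem' : ∀ x ∈ realizeSet pStar, ∀ y ∈ realizeSet pStar, mul x y ∈ realizeSet pStar
  inv_mem' : ∀ x ∈ realizeSet pStar, inv x ∈ realizeSet pStar
  mul_assoc' : ∀ x ∈ realizeSet pStar, ∀ y ∈ realizeSet pStar, ∀ z ∈ realizeSet pStar,
    mul (mul x y) z = mul x (mul y z)
  one_mul' : ∀ x ∈ realizeSet pStar, mul one x = x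
  mul_one' : ∀ x ∈ realizeSet pStar, mul x one = x
  inv_mul' : ∀ x ∈ realizeSet pStar, mul (inv x) x = one
  mul_inv' : ∀ x ∈ realizeSet pStar, mul x (inv x) = one

variable {L M}

namespace DefGroup

variable (D : DefGroup L M)

/-- The underlying set of the group `G = p*(𝔠)`. -/
def carrier : Set M := realizeSet D.pStar

/-- `G` is abelian. -/
def IsAbelian : Prop := ∀ x ∈ D.carrier, ∀ y ∈ D.carrier, D.mul x y = D.mul y x

/-- `H` is a subgroup of `G`. -/
def IsSubgroup (H : Set M) : Prop :=
  H ⊆ D.carrier ∧ D.one ∈ H ∧ (∀ x ∈ H, ∀ y ∈ H, D.mul x y ∈ H) ∧ ∀ x ∈ H, D.inv x ∈ H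

/-- `(G : H) ≤ c`: at most `c` left cosets of `H` cover `G`. -/
def indexLE (H : Set M) (c : Cardinal.{u}) : Prop :=
  ∃ S : Set M, S ⊆ D.carrier ∧ #S ≤ c ∧ ∀ g ∈ D.carrier, ∃ s ∈ S, D.mul (D.inv s) g ∈ H

/-- `(G : H) < c`: fewer than `c` left cosets of `H` cover `G`. -/
def indexLT (H : Set M) (c : Cardinal.{u}) : Prop :=
  ∃ S : Set M, S ⊆ D.carrier ∧ #S < c ∧ ∀ g ∈ D.carrier, ∃ s ∈ S, D.mul (D.inv s) g ∈ H

/-- The realization set of the partial type `q^n_Γ`. -/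
def qSet (Γ : Set (ParamFormula L M 1)) (n : ℕ) : Set M :=
  {c | ∃ d : Fin n → M × M,
    (∀ ℓ, (d ℓ).1 ∈ D.carrier ∧ (d ℓ).2 ∈ D.carrier) ∧
    (∀ ℓ, ∀ f ∈ Γ, (f.Realize fun _ => (d ℓ).1) ↔ (f.Realize fun _ => (d ℓ).2)) ∧
    c = (List.ofFn fun ℓ => D.mul (D.inv (d ℓ).1) (d ℓ).2).foldr D.mul D.one}

/-- The realization set of `q^n_{ā}`, i.e. `q^n_{Γ_ā}` where `Γ_ā` consists of all
formulas with parameters in the range of `ā`. -/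
def qTupleSet {α : Type u} (a : α → M) (n : ℕ) : Set M :=
  D.qSet {f : ParamFormula L M 1 | f.paramsIn (Set.range a)} n

end DefGroup

end Basic

variable {L : FirstOrder.Language.{u, u}} {M : Type u} [L.Structure M]

variable (L) in
/-- `X` is the union of fewer than `κ` realization sets of types over `B`. -/
def UnionTypeDefOver (X B : Set M) (κ : Cardinal.{u}) : Prop :=
  ∃ ι : Type u, #ι < κ ∧ ∃ P : ι → Set (ParamFormula L M 1),
    (∀ i, IsTypeOver (P i) B) ∧ X = ⋃ i, realizeSet (P i)

variable (L) in
/-- `X` is union-type-definable (with fewer than `κ` parameters altogether). -/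
def UnionTypeDefinable (X : Set M) (κ : Cardinal.{u}) : Prop :=
  ∃ B : Set M, #B < κ ∧ UnionTypeDefOver L X B κ

/-- `G_q = (p* ∪ q)(𝔠)`. -/
def Gq (D : DefGroup L M) (q : Set (ParamFormula L M 1)) : Set M :=
  realizeSet (D.pStar ∪ q)

/-- `R_B`: the family of 1-types `q` over `B` such that `G_q` is a subgroup of `G`
of index `< κ`. -/
def RB (D : DefGroup L M) (κ : Cardinal.{u}) (B : Set M) : Set (Set (ParamFormula L M 1)) :=
  {q | IsTypeOver q B ∧ D.IsSubgroup (Gq D q) ∧ D.indexLT (Gq D q) κ}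

/-- `q_B`, the union of all members of `R_B`. -/
def qB (D : DefGroup L M) (κ : Cardinal.{u}) (B : Set M) : Set (ParamFormula L M 1) :=
  ⋃₀ RB D κ B

/-- `G_B = q_B(𝔠) ∩ G`. -/
def GB (D : DefGroup L M) (κ : Cardinal.{u}) (B : Set M) : Set M :=
  realizeSet (qB D κ B) ∩ D.carrier

/-- The complete type of `a` over `A` (as the set of all param-formulas over `A`
satisfied by `a`). -/
def typeOf (A : Set M) (a : M) : Set (ParamFormula L M 1) :=
  {f | f.paramsIn A ∧ f.Realize fun _ => a}

/-- `φ(x̄, ȳ₀, …, ȳ_{k-1})` is `k`-independent: for every index set of size `< κ` there is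
an array of parameter tuples such that every pattern on `^k ι` is (finitely) satisfiable. -/
def FormulaKIndep (M : Type u) [L.Structure M] (κ : Cardinal.{u}) (k nx : ℕ) (ny : Fin k → ℕ)
    (φ : L.Formula (Fin nx ⊕ ((ℓ : Fin k) × Fin (ny ℓ)))) : Prop :=
  ∀ ι : Type u, #ι < κ →
    ∃ a : (ℓ : Fin k) → ι → Fin (ny ℓ) → M,
      ∀ (u : Set (Fin k → ι)) (s : Finset (Fin k → ι)),
        ∃ x : Fin nx → M,
          ∀ η ∈ s, ((φ.Realize (Sum.elim x fun p => a p.1 (η p.1) p.2)) ↔ η ∈ u)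

/-- `Th(M)` is `k`-independent. -/
def KIndependent (L : FirstOrder.Language.{u, u}) (M : Type u) [L.Structure M] (κ : Cardinal.{u})
    (k : ℕ) : Prop :=
  ∃ (nx : ℕ) (ny : Fin k → ℕ) (φ : L.Formula (Fin nx ⊕ ((ℓ : Fin k) × Fin (ny ℓ)))),
    FormulaKIndep M κ k nx ny φ

/-- `Th(M)` is `k`-dependent. -/
def KDependent (L : FirstOrder.Language.{u, u}) (M : Type u) [L.Structure M] (κ : Cardinal.{u})
    (k : ℕ) : Prop :=
  ¬ KIndependent L M κ k

/-- The language of Boolean algebras: constants `⊥, ⊤`, a unary function (complement) and two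
binary functions (meet, join). -/
def baLang : FirstOrder.Language.{u, u} where
  Functions := fun n =>
    ULift.{u} ((PLift (n = 0) × Fin 2) ⊕ (PLift (n = 1) ⊕ (PLift (n = 2) × Fin 2)))
  Relations := fun _ => ULift.{u} Empty

def baBot : baLang.{u}.Functions 0 := ULift.up (Sum.inl (PLift.up rfl, 0))
def baTop : baLang.{u}.Functions 0 := ULift.up (Sum.inl (PLift.up rfl, 1))
def baCompl : baLang.{u}.Functions 1 := ULift.up (Sum.inr (Sum.inl (PLift.up rfl)))
def baMeet : baLang.{u}.Functions 2 := ULift.up (Sum.inr (Sum.inr (PLift.up rfl, 0)))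
def baJoin : baLang.{u}.Functions 2 := ULift.up (Sum.inr (Sum.inr (PLift.up rfl, 1)))

/-- The formula `φ(x, y_0, …, y_{k-1}) := (y_0 ∩ ⋯ ∩ y_{k-1} ≤ x)`, rendered as
`(y_0 ∩ ⋯ ∩ y_{k-1}) ∩ x = y_0 ∩ ⋯ ∩ y_{k-1}`. -/
def meetLeFormula (k : ℕ) : baLang.{u}.Formula (Fin 1 ⊕ ((ℓ : Fin k) × Fin 1)) :=
  let ymeet : baLang.{u}.Term (Fin 1 ⊕ ((ℓ : Fin k) × Fin 1)) :=
    (List.ofFn fun ℓ : Fin k => Language.Term.var (Sum.inr ⟨ℓ, (0 : Fin 1)⟩)).foldr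
      (fun t s => Language.Term.func baMeet ![t, s]) (Language.Term.func baTop ![])
  Language.Term.equal (Language.Term.func baMeet ![ymeet, Language.Term.var (Sum.inl 0)]) ymeet

section Shelah886Aux

open FirstOrder Language Cardinal

/-! ### Generic transfinite recursion with choice -/

lemma wf_rec_choice {J : Type*} {X : Type*} [Nonempty X] (r : J → J → Prop) [IsWellOrder J r]
    (Q : J → (J → X) → X → Prop)
    (hmono : ∀ j (g g' : J → X) x, (∀ j', r j' j → g j' = g' j') → Q j g x → Q j g' x)
    (hex : ∀ j (g : J → X), (∀ j', r j' j → Q j' g (g j')) → ∃ x, Q j g x) :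
    ∃ F : J → X, ∀ j, Q j F (F j) := by
  classical
  have wf : WellFounded r := IsWellFounded.wf
  let ext : (j : J) → ((j' : J) → r j' j → X) → (J → X) := fun j prev j' =>
    if h : r j' j then prev j' h else Classical.arbitrary X
  let body : (j : J) → ((j' : J) → r j' j → X) → X := fun j prev =>
    if h : ∃ x, Q j (ext j prev) x then h.choose else Classical.arbitrary X
  let F : J → X := wf.fix body
  refine ⟨F, ?_⟩
  intro j
  induction j using WellFounded.induction wf with
  | _ j IH =>
    have hg : ∀ (j' : J) (h : r j' j), ext j (fun j' _ => F j') j' = F j' := fun j' h => dif_pos h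
    have hQ' : ∀ j', r j' j → Q j' (ext j (fun j' _ => F j')) (ext j (fun j' _ => F j') j') := by
      intro j' h
      rw [hg j' h]
      exact hmono j' F _ (F j')
        (fun j'' h'' => (hg j'' (IsTrans.trans _ _ _ h'' h)).symm) (IH j' h)
    have hx : ∃ x, Q j (ext j (fun j' _ => F j')) x := hex j _ hQ'
    have hFj : F j = hx.choose := by
      have heq : F j = body j (fun j' _ => F j') := wf.fix_eq body j
      rw [heq]
      exact dif_pos hx
    rw [hFj]
    exact hmono j _ F _ (fun j' h => hg j' h) hx.choose_spec

/-! ### Infinite antichains in infinite Boolean algebras -/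

lemma infBelow_split {B : Type*} [BooleanAlgebra B] {r : B} (h : {x : B | x ≤ r}.Infinite) :
    ∃ b : B, b ≠ ⊥ ∧ b ≤ r ∧ {x : B | x ≤ r ⊓ bᶜ}.Infinite := by
  obtain ⟨a, ha⟩ := (h.diff ((Set.finite_singleton (⊥ : B)).insert r)).nonempty
  obtain ⟨har, hane⟩ := ha
  have han0 : a ≠ ⊥ := fun hh => hane (by simp [hh])
  have hanr : a ≠ r := fun hh => hane (by simp [hh])
  have har' : a ≤ r := har
  have hsplit : a ⊔ (r ⊓ aᶜ) = r := by
    rw [sup_inf_left, sup_compl_eq_top, inf_top_eq, sup_eq_right.2 har']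
  by_cases hfin : {x : B | x ≤ a}.Finite
  · refine ⟨a, han0, har', ?_⟩
    intro hfin2
    apply h
    have hinj : Set.InjOn (fun x => (x ⊓ a, x ⊓ (r ⊓ aᶜ))) {x : B | x ≤ r} := by
      intro x hx y hy hxy
      have hx' : x = (x ⊓ a) ⊔ (x ⊓ (r ⊓ aᶜ)) := by
        rw [← inf_sup_left, hsplit, inf_eq_left.2 hx]
      have hy' : y = (y ⊓ a) ⊔ (y ⊓ (r ⊓ aᶜ)) := by
        rw [← inf_sup_left, hsplit, inf_eq_left.2 hy]
      simp only [Prod.mk.injEq] at hxy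
      rw [hx', hy', hxy.1, hxy.2]
    apply Set.Finite.of_finite_image _ hinj
    apply Set.Finite.subset (hfin.prod hfin2)
    rintro p ⟨x, _, rfl⟩
    exact ⟨inf_le_right, inf_le_right⟩
  · refine ⟨r ⊓ aᶜ, ?_, inf_le_left, ?_⟩
    · intro hh
      rw [← _root_.sdiff_eq] at hh
      exact hanr (le_antisymm har' (sdiff_eq_bot_iff.1 hh))
    · have heq : r ⊓ (r ⊓ aᶜ)ᶜ = a := by
        rw [compl_inf, _root_.compl_compl, inf_sup_left, inf_compl_eq_bot, bot_sup_eq,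
          inf_eq_right.2 har']
      rw [heq]
      exact hfin

lemma exists_antichain (B : Type*) [BooleanAlgebra B] [Infinite B] :
    ∃ f : ℕ → B, (∀ n, f n ≠ ⊥) ∧ ∀ m n : ℕ, m ≠ n → f m ⊓ f n = ⊥ := by
  have htop : {x : B | x ≤ ⊤}.Infinite := by
    have h : {x : B | x ≤ (⊤ : B)} = Set.univ := by ext y; simp
    rw [h]
    exact Set.infinite_univ
  let pick : {r : B // {x : B | x ≤ r}.Infinite} → B := fun p => (infBelow_split p.2).choose
  have pickspec : ∀ p, pick p ≠ ⊥ ∧ pick p ≤ p.1 ∧ {x : B | x ≤ p.1 ⊓ (pick p)ᶜ}.Infinite :=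
    fun p => (infBelow_split p.2).choose_spec
  let next : {r : B // {x : B | x ≤ r}.Infinite} → {r : B // {x : B | x ≤ r}.Infinite} :=
    fun p => ⟨p.1 ⊓ (pick p)ᶜ, (pickspec p).2.2⟩
  let chain : ℕ → {r : B // {x : B | x ≤ r}.Infinite} := fun n => next^[n] ⟨⊤, htop⟩
  have hchain : ∀ n, chain (n + 1) = next (chain n) := fun n =>
    Function.iterate_succ_apply' next n _
  have hanti : ∀ m n, m ≤ n → (chain n).1 ≤ (chain m).1 := by
    intro m n h
    induction n, h using Nat.le_induction with
    | base => exact le_refl _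
    | succ n hmn ih => exact le_trans (by rw [hchain n]; exact inf_le_left) ih
  refine ⟨fun n => pick (chain n), fun n => (pickspec _).1, ?_⟩
  have key : ∀ m n : ℕ, m < n → pick (chain n) ⊓ pick (chain m) = ⊥ := by
    intro m n h
    have h1 : pick (chain n) ≤ (chain n).1 := (pickspec _).2.1
    have h2 : (chain n).1 ≤ (chain (m + 1)).1 := hanti _ _ h
    have h3 : (chain (m + 1)).1 ≤ (pick (chain m))ᶜ := by
      rw [hchain m]; exact inf_le_right
    have h4 : pick (chain n) ≤ (pick (chain m))ᶜ := le_trans h1 (le_trans h2 h3)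
    refine le_bot_iff.1 (le_trans (inf_le_inf_right _ h4) ?_)
    simp
  intro m n hmn
  rcases lt_or_gt_of_ne hmn with h | h
  · rw [inf_comm]; exact key m n h
  · exact key n m h

/-! ### Parametrized formulas for Boolean algebras -/

variable {N : Type u} [baLang.{u}.Structure N] [BooleanAlgebra N]

/-- The param-formula `x ≠ ⊥`. -/
def pfNe0 (N : Type u) [baLang.{u}.Structure N] : ParamFormula baLang.{u} N 1 :=
  ⟨0, Formula.not (Term.equal (Term.var (Sum.inl 0)) (Term.func baBot ![])), ![]⟩

/-- The param-formula `x ⊓ c = ⊥`. -/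
def pfDisj (c : N) : ParamFormula baLang.{u} N 1 :=
  ⟨1, Term.equal (Term.func baMeet ![Term.var (Sum.inl 0), Term.var (Sum.inr 0)])
    (Term.func baBot ![]), ![c]⟩

/-- The param-formula `c ≤ x`, rendered as `c ⊓ x = c`. -/
def pfLe (c : N) : ParamFormula baLang.{u} N 1 :=
  ⟨1, Term.equal (Term.func baMeet ![Term.var (Sum.inr 0), Term.var (Sum.inl 0)])
    (Term.var (Sum.inr 0)), ![c]⟩

lemma pfDisj_injective : Function.Injective (pfDisj (N := N)) := by
  intro c c' h
  simp only [pfDisj, ParamFormula.mk.injEq, heq_eq_eq, true_and] at h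
  simpa using congrFun h 0

lemma pfLe_injective : Function.Injective (pfLe (N := N)) := by
  intro c c' h
  simp only [pfLe, ParamFormula.mk.injEq, heq_eq_eq, true_and] at h
  simpa using congrFun h 0

lemma pfNe0_paramsIn {B : Set N} : (pfNe0 N).paramsIn B :=
  fun i => i.elim0

lemma pfDisj_paramsIn {B : Set N} {c : N} (hc : c ∈ B) : (pfDisj c).paramsIn B := by
  have h : ∀ i : Fin 1, (![c] : Fin 1 → N) i ∈ B := by
    intro i
    fin_cases i
    simpa using hc
  exact h

lemma pfLe_paramsIn {B : Set N} {c : N} (hc : c ∈ B) : (pfLe c).paramsIn B := by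
  have h : ∀ i : Fin 1, (![c] : Fin 1 → N) i ∈ B := by
    intro i
    fin_cases i
    simpa using hc
  exact h

lemma funMap_meet (hmeet : ∀ a b : N, Structure.funMap baMeet ![a, b] = a ⊓ b)
    (g : Fin 2 → N) : Structure.funMap baMeet g = g 0 ⊓ g 1 := by
  have hg : g = ![g 0, g 1] := by
    funext i; fin_cases i <;> rfl
  conv_lhs => rw [hg]
  rw [hmeet]

lemma pfNe0_realize (hbot : ∀ v : Fin 0 → N, Structure.funMap baBot v = ⊥) (x : N) :
    (pfNe0 N).Realize (fun _ => x) ↔ x ≠ ⊥ := by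
  simp only [ParamFormula.Realize, pfNe0, Formula.realize_not, Formula.realize_equal,
    Term.realize_var, Term.realize_func, Sum.elim_inl]
  rw [hbot]

lemma pfDisj_realize (hbot : ∀ v : Fin 0 → N, Structure.funMap baBot v = ⊥)
    (hmeet : ∀ a b : N, Structure.funMap baMeet ![a, b] = a ⊓ b) (c x : N) :
    (pfDisj c).Realize (fun _ => x) ↔ x ⊓ c = ⊥ := by
  simp only [ParamFormula.Realize, pfDisj, Formula.realize_equal, Term.realize_func]
  rw [funMap_meet hmeet, hbot]
  simp only [Matrix.cons_val_zero, Matrix.cons_val_one, Matrix.head_cons, Term.realize_var,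
    Sum.elim_inl, Sum.elim_inr]

lemma pfLe_realize (hmeet : ∀ a b : N, Structure.funMap baMeet ![a, b] = a ⊓ b) (c x : N) :
    (pfLe c).Realize (fun _ => x) ↔ c ≤ x := by
  simp only [ParamFormula.Realize, pfLe, Formula.realize_equal, Term.realize_func]
  rw [funMap_meet hmeet]
  simp only [Matrix.cons_val_zero, Matrix.cons_val_one, Matrix.head_cons, Term.realize_var,
    Sum.elim_inl, Sum.elim_inr]
  simp [inf_eq_left]

/-! ### Folded meets -/

lemma foldr_inf_le {N' : Type*} [SemilatticeInf N'] [OrderTop N'] {l : List N'} {y : N'}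
    (h : y ∈ l) : l.foldr (· ⊓ ·) ⊤ ≤ y := by
  induction l with
  | nil => cases h
  | cons t l ih =>
    rcases List.mem_cons.1 h with rfl | h'
    · exact inf_le_left
    · exact le_trans inf_le_right (ih h')

lemma le_foldr_inf {N' : Type*} [SemilatticeInf N'] [OrderTop N'] {l : List N'} {x : N'}
    (h : ∀ y ∈ l, x ≤ y) : x ≤ l.foldr (· ⊓ ·) ⊤ := by
  induction l with
  | nil => exact le_top
  | cons t l ih =>
    exact le_inf (h t List.mem_cons_self) (ih fun y hy => h y (List.mem_cons_of_mem _ hy))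

lemma realize_meetFoldr (htop : ∀ v : Fin 0 → N, Structure.funMap baTop v = ⊤)
    (hmeet : ∀ a b : N, Structure.funMap baMeet ![a, b] = a ⊓ b)
    {α : Type*} (v : α → N) (ts : List (baLang.{u}.Term α)) :
    Term.realize v (ts.foldr (fun t s => Term.func baMeet ![t, s]) (Term.func baTop ![]))
      = (ts.map (Term.realize v)).foldr (· ⊓ ·) ⊤ := by
  induction ts with
  | nil =>
    simp only [List.foldr_nil, List.map_nil, Term.realize_func]
    exact htop _
  | cons t ts ih =>
    simp only [List.foldr_cons, List.map_cons, Term.realize_func]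
    rw [funMap_meet hmeet]
    simp only [Matrix.cons_val_zero, Matrix.cons_val_one, Matrix.head_cons]
    rw [ih]

lemma meetLe_realize (htop : ∀ v : Fin 0 → N, Structure.funMap baTop v = ⊤)
    (hmeet : ∀ a b : N, Structure.funMap baMeet ![a, b] = a ⊓ b) (k : ℕ)
    (v : Fin 1 ⊕ ((ℓ : Fin k) × Fin 1) → N) :
    (meetLeFormula k).Realize v ↔
      (List.ofFn fun ℓ : Fin k => v (Sum.inr ⟨ℓ, 0⟩)).foldr (· ⊓ ·) ⊤ ≤ v (Sum.inl 0) := by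
  have hy := realize_meetFoldr htop hmeet v
    (List.ofFn fun ℓ : Fin k => Term.var (Sum.inr ⟨ℓ, (0 : Fin 1)⟩))
  rw [List.map_ofFn] at hy
  have hcomp : (Term.realize v ∘ fun ℓ : Fin k =>
      (Term.var (Sum.inr ⟨ℓ, (0 : Fin 1)⟩) : baLang.{u}.Term (Fin 1 ⊕ ((ℓ : Fin k) × Fin 1))))
      = fun ℓ : Fin k => v (Sum.inr ⟨ℓ, 0⟩) := by
    funext ℓ; rfl
  rw [hcomp] at hy
  simp only [meetLeFormula]
  rw [Formula.realize_equal]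
  simp only [Term.realize_func]
  rw [funMap_meet hmeet]
  simp only [Matrix.cons_val_zero, Matrix.cons_val_one, Matrix.head_cons, Term.realize_var,
    Sum.elim_inl]
  rw [hy]
  exact inf_eq_left

/-! ### The two saturation steps -/

lemma sat_step1 {κbar : Cardinal.{u}} (hℵ0 : ℵ₀ < κbar)
    (hκsat : Saturated baLang.{u} N κbar)
    (hbot : ∀ v : Fin 0 → N, Structure.funMap baBot v = ⊥)
    (hmeet : ∀ a b : N, Structure.funMap baMeet ![a, b] = a ⊓ b)
    (f : ℕ → N) (hf0 : ∀ n, f n ≠ ⊥) (hfd : ∀ m n : ℕ, m ≠ n → f m ⊓ f n = ⊥)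
    (E : Set N) (hE : #E < κbar) (hEf : ∀ c ∈ E, ∀ n, c ⊓ f n = ⊥) :
    ∃ x : N, x ≠ ⊥ ∧ (∀ n, x ⊓ f n = ⊥) ∧ ∀ c ∈ E, x ⊓ c = ⊥ := by
  classical
  have hfinj : Function.Injective f := by
    intro m n h
    by_contra hmn
    have hb := hfd m n hmn
    rw [h, inf_idem] at hb
    exact hf0 n hb
  have hB : #(Set.range f ∪ E : Set N) < κbar := by
    apply lt_of_le_of_lt (Cardinal.mk_union_le _ _)
    apply Cardinal.add_lt_of_lt hℵ0.le _ hE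
    exact lt_of_le_of_lt (Cardinal.le_aleph0_iff_set_countable.2 (Set.countable_range f)) hℵ0
  obtain ⟨x, hx⟩ := hκsat (Set.range f ∪ E) hB
      (insert (pfNe0 N) (pfDisj '' (Set.range f ∪ E)))
      (by
        intro g hg
        rcases Set.mem_insert_iff.1 hg with rfl | hmem
        · exact pfNe0_paramsIn
        · obtain ⟨c, hc, rfl⟩ := hmem
          exact pfDisj_paramsIn hc)
      (by
        intro s hs hsfin
        have hCfin : {c : N | pfDisj c ∈ s}.Finite := hsfin.preimage pfDisj_injective.injOn
        obtain ⟨m, hm⟩ := (hCfin.preimage hfinj.injOn).infinite_compl.nonempty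
        refine ⟨f m, ?_⟩
        intro g hg
        rcases Set.mem_insert_iff.1 (hs hg) with rfl | hmem
        · exact (pfNe0_realize hbot (f m)).2 (hf0 m)
        · obtain ⟨c, hc, rfl⟩ := hmem
          rw [pfDisj_realize hbot hmeet]
          rcases hc with ⟨n, rfl⟩ | hcE
          · have hnm : m ≠ n := by
              rintro rfl
              exact hm hg
            exact hfd m n hnm
          · rw [inf_comm]; exact hEf c hcE m)
  refine ⟨x, ?_, ?_, ?_⟩
  · exact (pfNe0_realize hbot x).1 (hx _ (Set.mem_insert _ _))
  · intro n
    exact (pfDisj_realize hbot hmeet (f n) x).1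
      (hx _ (Set.mem_insert_of_mem _ ⟨f n, Or.inl ⟨n, rfl⟩, rfl⟩))
  · intro c hc
    exact (pfDisj_realize hbot hmeet c x).1
      (hx _ (Set.mem_insert_of_mem _ ⟨c, Or.inr hc, rfl⟩))

lemma sat_step2 {κbar : Cardinal.{u}} (hℵ0 : ℵ₀ < κbar)
    (hκsat : Saturated baLang.{u} N κbar)
    (hbot : ∀ v : Fin 0 → N, Structure.funMap baBot v = ⊥)
    (hmeet : ∀ a b : N, Structure.funMap baMeet ![a, b] = a ⊓ b)
    (S T E : Set N) (hS : #S < κbar) (hT : #T < κbar) (hE : #E < κbar)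
    (hST : ∀ c ∈ S, ∀ d ∈ T, c ⊓ d = ⊥) (hSE : ∀ c ∈ S, ∀ d ∈ E, c ⊓ d = ⊥) :
    ∃ x : N, (∀ c ∈ S, c ≤ x) ∧ (∀ d ∈ T, x ⊓ d = ⊥) ∧ ∀ d ∈ E, x ⊓ d = ⊥ := by
  classical
  have hB : #(S ∪ (T ∪ E) : Set N) < κbar :=
    lt_of_le_of_lt (Cardinal.mk_union_le _ _)
      (Cardinal.add_lt_of_lt hℵ0.le hS
        (lt_of_le_of_lt (Cardinal.mk_union_le _ _) (Cardinal.add_lt_of_lt hℵ0.le hT hE)))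
  obtain ⟨x, hx⟩ := hκsat (S ∪ (T ∪ E)) hB ((pfLe '' S) ∪ (pfDisj '' (T ∪ E)))
      (by
        intro g hg
        rcases hg with ⟨c, hc, rfl⟩ | ⟨c, hc, rfl⟩
        · exact pfLe_paramsIn (Set.mem_union_left _ hc)
        · exact pfDisj_paramsIn (Set.mem_union_right _ hc))
      (by
        intro s hs hsfin
        have hCfin : (S ∩ {c : N | pfLe c ∈ s}).Finite :=
          (hsfin.preimage pfLe_injective.injOn).subset Set.inter_subset_right
        refine ⟨hCfin.toFinset.sup id, ?_⟩
        intro g hg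
        rcases hs hg with ⟨c, hc, rfl⟩ | ⟨c, hc, rfl⟩
        · rw [pfLe_realize hmeet]
          exact Finset.le_sup (f := id) (hCfin.mem_toFinset.2 ⟨hc, hg⟩)
        · rw [pfDisj_realize hbot hmeet, Finset.sup_inf_distrib_right]
          apply le_bot_iff.1
          apply Finset.sup_le
          intro d hd
          rw [hCfin.mem_toFinset] at hd
          rcases hc with hcT | hcE
          · exact (hST d hd.1 c hcT).le
          · exact (hSE d hd.1 c hcE).le)
  refine ⟨x, ?_, ?_, ?_⟩
  · intro c hc
    exact (pfLe_realize hmeet c x).1 (hx _ (Set.mem_union_left _ ⟨c, hc, rfl⟩))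
  · intro d hd
    exact (pfDisj_realize hbot hmeet d x).1
      (hx _ (Set.mem_union_right _ ⟨d, Or.inl hd, rfl⟩))
  · intro d hd
    exact (pfDisj_realize hbot hmeet d x).1
      (hx _ (Set.mem_union_right _ ⟨d, Or.inr hd, rfl⟩))

end Shelah886Aux


/-- Example 2.10 of [Sh:886]: the (complete) theory of any infinite Boolean algebra is
`k`-independent for every `k ≥ 1`, witnessed by the formula `y_0 ∩ ⋯ ∩ y_{k-1} ≤ x`;
moreover concretely: given pairwise disjoint nonzero `⟨a_{i,j} : i,j < n⟩`, setting
`b_i = ⋃_j a_{i,j}`, `c_j = ⋃_i a_{i,j}` and `a_u = ⋃_{(i,j)∈u} a_{i,j}`, the element `a_u`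
realizes the pattern `⟨φ(x, b_i, c_j)^{if((i,j)∈u)} : i,j < n⟩`. -/
theorem example_dt25
    {M : Type u} [baLang.{u}.Structure M] [BooleanAlgebra M] [Infinite M]
    (κbar : Cardinal.{u}) (hκinacc : κbar.IsInaccessible)
    (hκT : theoryCard baLang.{u} < κbar) (hκsat : Saturated baLang.{u} M κbar)
    (hbot : ∀ v : Fin 0 → M, Language.Structure.funMap baBot v = ⊥)
    (htop : ∀ v : Fin 0 → M, Language.Structure.funMap baTop v = ⊤)
    (hcompl : ∀ a : M, Language.Structure.funMap baCompl ![a] = aᶜ)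
    (hmeet : ∀ a b : M, Language.Structure.funMap baMeet ![a, b] = a ⊓ b)
    (hjoin : ∀ a b : M, Language.Structure.funMap baJoin ![a, b] = a ⊔ b) :
    (∀ k : ℕ, 1 ≤ k → FormulaKIndep M κbar k 1 (fun _ => 1) (meetLeFormula k)) ∧
    (∀ (n : ℕ) (a : Fin n → Fin n → M),
      (∀ i j, a i j ≠ ⊥) →
      (∀ i j i' j', (i, j) ≠ (i', j') → a i j ⊓ a i' j' = ⊥) →
      ∀ u : Finset (Fin n × Fin n), ∀ i j : Fin n,
        ((Finset.univ.sup fun j' => a i j') ⊓ (Finset.univ.sup fun i' => a i' j) ≤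
            u.sup (fun p => a p.1 p.2) ↔ (i, j) ∈ u)) := by
  have hℵ0 : ℵ₀ < κbar := hκinacc.1
  constructor
  · -- Part 1: the formula `y₀ ∩ ⋯ ∩ y_{k-1} ≤ x` is `k`-independent.
    intro k _hk
    intro ι hι
    classical
    obtain ⟨f, hf0, hfd⟩ := exists_antichain M
    have hμ : ℵ₀ ⊔ #ι < κbar := max_lt hℵ0 hι
    have hJ : #(Fin k → ι) < κbar := by
      have h1 : #(Fin k → ι) ≤ (ℵ₀ ⊔ #ι) ^ (ℵ₀ : Cardinal.{u}) := by
        rw [Cardinal.mk_arrow]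
        simp only [Cardinal.lift_id, Cardinal.lift_uzero, Cardinal.lift_natCast,
          Cardinal.mk_fin]
        calc (#ι) ^ (k : Cardinal.{u}) ≤ (ℵ₀ ⊔ #ι) ^ (k : Cardinal.{u}) :=
              Cardinal.power_le_power_right le_sup_right
          _ ≤ (ℵ₀ ⊔ #ι) ^ (ℵ₀ : Cardinal.{u}) := by
              apply Cardinal.power_le_power_left
              · exact (lt_of_lt_of_le Cardinal.aleph0_pos le_sup_left).ne'
              · exact (Cardinal.nat_lt_aleph0 k).le
      have h2 : (ℵ₀ ⊔ #ι) ^ (ℵ₀ : Cardinal.{u}) ≤ 2 ^ (ℵ₀ ⊔ #ι) := by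
        calc (ℵ₀ ⊔ #ι) ^ (ℵ₀ : Cardinal.{u})
            ≤ (2 ^ (ℵ₀ ⊔ #ι)) ^ (ℵ₀ : Cardinal.{u}) :=
              Cardinal.power_le_power_right (Cardinal.cantor _).le
          _ = 2 ^ ((ℵ₀ ⊔ #ι) * ℵ₀) := (Cardinal.power_mul).symm
          _ = 2 ^ (ℵ₀ ⊔ #ι) := by rw [Cardinal.mul_aleph0_eq le_sup_left]
      exact lt_of_le_of_lt (h1.trans h2) (hκinacc.isStrongLimit.two_power_lt hμ)
    have hK : #(Fin k × ι) < κbar := by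
      rw [Cardinal.mk_prod]
      simp only [Cardinal.lift_id, Cardinal.lift_uzero, Cardinal.lift_natCast,
        Cardinal.mk_fin]
      exact Cardinal.mul_lt_of_lt hℵ0.le
        (lt_trans (Cardinal.nat_lt_aleph0 k) hℵ0) hι
    -- Build a pairwise disjoint family of nonzero elements indexed by `Fin k → ι`.
    obtain ⟨e, he⟩ := wf_rec_choice (X := M)
      (WellOrderingRel : (Fin k → ι) → (Fin k → ι) → Prop)
      (fun j g x => x ≠ ⊥ ∧ (∀ n, x ⊓ f n = ⊥) ∧ ∀ j', WellOrderingRel j' j → x ⊓ g j' = ⊥)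
      (by
        rintro j g g' x hgg ⟨h1, h2, h3⟩
        exact ⟨h1, h2, fun j' h => by rw [← hgg j' h]; exact h3 j' h⟩)
      (by
        intro j g hIH
        obtain ⟨x, hx1, hx2, hx3⟩ := sat_step1 hℵ0 hκsat hbot hmeet f hf0 hfd
          (g '' {j' | WellOrderingRel j' j})
          (lt_of_le_of_lt (le_trans Cardinal.mk_image_le (Cardinal.mk_set_le _)) hJ)
          (by rintro c ⟨j', hj', rfl⟩ n; exact (hIH j' hj').2.1 n)
        exact ⟨x, hx1, hx2, fun j' h => hx3 (g j') ⟨j', h, rfl⟩⟩)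
    have he1 : ∀ j, e j ≠ ⊥ := fun j => (he j).1
    have he3 : ∀ j j' : Fin k → ι, j ≠ j' → e j ⊓ e j' = ⊥ := by
      intro j j' hne
      rcases trichotomous_of WellOrderingRel j j' with h | h | h
      · rw [inf_comm]; exact (he j').2.2 j h
      · exact absurd h hne
      · exact (he j).2.2 j' h
    -- Build the grid elements `A (ℓ, α)`.
    obtain ⟨A, hA⟩ := wf_rec_choice (X := M)
      (WellOrderingRel : (Fin k × ι) → (Fin k × ι) → Prop)
      (fun p g x => (∀ j : Fin k → ι, j p.1 = p.2 → e j ≤ x) ∧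
        (∀ j : Fin k → ι, j p.1 ≠ p.2 → x ⊓ e j = ⊥) ∧
        ∀ q, WellOrderingRel q p → q.1 = p.1 → x ⊓ g q = ⊥)
      (by
        rintro p g g' x hgg ⟨h1, h2, h3⟩
        exact ⟨h1, h2, fun q hq hq1 => by rw [← hgg q hq]; exact h3 q hq hq1⟩)
      (by
        intro p g hIH
        obtain ⟨x, hx1, hx2, hx3⟩ := sat_step2 hℵ0 hκsat hbot hmeet
          (e '' {j : Fin k → ι | j p.1 = p.2}) (e '' {j : Fin k → ι | j p.1 ≠ p.2})
          (g '' {q : Fin k × ι | WellOrderingRel q p ∧ q.1 = p.1})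
          (lt_of_le_of_lt (le_trans Cardinal.mk_image_le (Cardinal.mk_set_le _)) hJ)
          (lt_of_le_of_lt (le_trans Cardinal.mk_image_le (Cardinal.mk_set_le _)) hJ)
          (lt_of_le_of_lt (le_trans Cardinal.mk_image_le (Cardinal.mk_set_le _)) hK)
          (by
            rintro c ⟨j, hj, rfl⟩ d ⟨j', hj', rfl⟩
            exact he3 j j' (by rintro rfl; exact hj' hj))
          (by
            rintro c ⟨j, hj, rfl⟩ d ⟨q, ⟨hq, hq1⟩, rfl⟩
            have hqp : q ≠ p := fun hh => (irrefl_of WellOrderingRel p) (hh ▸ hq)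
            have hq2 : q.2 ≠ p.2 := fun hh => hqp (Prod.ext hq1 hh)
            have hj2 : j q.1 ≠ q.2 := by
              rw [hq1, hj]
              exact fun hh => hq2 hh.symm
            rw [inf_comm]
            exact (hIH q hq).2.1 j hj2)
        exact ⟨x, fun j hj => hx1 (e j) ⟨j, hj, rfl⟩, fun j hj => hx2 (e j) ⟨j, hj, rfl⟩,
          fun q hq hq1 => hx3 (g q) ⟨q, ⟨hq, hq1⟩, rfl⟩⟩)
    have P1 : ∀ (j : Fin k → ι) (ℓ : Fin k), e j ≤ A (ℓ, j ℓ) :=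
      fun j ℓ => (hA (ℓ, j ℓ)).1 j rfl
    have P2 : ∀ (ℓ : Fin k) (α α' : ι), α ≠ α' → A (ℓ, α) ⊓ A (ℓ, α') = ⊥ := by
      intro ℓ α α' hne
      rcases trichotomous_of WellOrderingRel ((ℓ, α) : Fin k × ι) (ℓ, α') with h | h | h
      · rw [inf_comm]; exact (hA (ℓ, α')).2.2 (ℓ, α) h rfl
      · exact absurd (congrArg Prod.snd h) hne
      · exact (hA (ℓ, α)).2.2 (ℓ, α') h rfl
    have hDle : ∀ (j : Fin k → ι) (ℓ : Fin k),
        (List.ofFn fun ℓ' => A (ℓ', j ℓ')).foldr (· ⊓ ·) ⊤ ≤ A (ℓ, j ℓ) :=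
      fun j ℓ => foldr_inf_le (List.mem_ofFn.2 ⟨ℓ, rfl⟩)
    have hDe : ∀ j : Fin k → ι, e j ≤ (List.ofFn fun ℓ' => A (ℓ', j ℓ')).foldr (· ⊓ ·) ⊤ := by
      intro j
      apply le_foldr_inf
      intro y hy
      rw [List.mem_ofFn] at hy
      obtain ⟨ℓ, rfl⟩ := hy
      exact P1 j ℓ
    have hD0 : ∀ j : Fin k → ι, (List.ofFn fun ℓ' => A (ℓ', j ℓ')).foldr (· ⊓ ·) ⊤ ≠ ⊥ :=
      fun j h => he1 j (le_bot_iff.1 (h ▸ hDe j))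
    have hDd : ∀ j j' : Fin k → ι, j ≠ j' →
        ((List.ofFn fun ℓ' => A (ℓ', j ℓ')).foldr (· ⊓ ·) ⊤) ⊓
          ((List.ofFn fun ℓ' => A (ℓ', j' ℓ')).foldr (· ⊓ ·) ⊤) = ⊥ := by
      intro j j' hne
      obtain ⟨ℓ, hℓ⟩ := Function.ne_iff.1 hne
      exact le_bot_iff.1 ((inf_le_inf (hDle j ℓ) (hDle j' ℓ)).trans (P2 ℓ _ _ hℓ).le)
    refine ⟨fun ℓ i _ => A (ℓ, i), ?_⟩
    intro u s
    refine ⟨fun _ => (s.filter (fun j => j ∈ u)).sup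
      (fun j => (List.ofFn fun ℓ' => A (ℓ', j ℓ')).foldr (· ⊓ ·) ⊤), ?_⟩
    intro η hη
    rw [meetLe_realize htop hmeet]
    simp only [Sum.elim_inl, Sum.elim_inr]
    constructor
    · intro h
      by_contra hu
      apply hD0 η
      have h1 : (List.ofFn fun ℓ' => A (ℓ', η ℓ')).foldr (· ⊓ ·) ⊤ =
          ((List.ofFn fun ℓ' => A (ℓ', η ℓ')).foldr (· ⊓ ·) ⊤) ⊓
            (s.filter (fun j => j ∈ u)).sup
              (fun j => (List.ofFn fun ℓ' => A (ℓ', j ℓ')).foldr (· ⊓ ·) ⊤) :=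
        (inf_eq_left.2 h).symm
      rw [Finset.sup_inf_distrib_left] at h1
      rw [h1]
      apply le_bot_iff.1
      apply Finset.sup_le
      intro j hj
      rw [Finset.mem_filter] at hj
      exact (hDd η j (fun hh => hu (hh ▸ hj.2))).le
    · intro hu
      exact Finset.le_sup (f := fun j => (List.ofFn fun ℓ' => A (ℓ', j ℓ')).foldr (· ⊓ ·) ⊤)
        (Finset.mem_filter.2 ⟨hη, hu⟩)
  · -- Part 2: the concrete `n × n` grid.
    intro n a hne hdisj u i j
    classical
    have key : ((Finset.univ.sup fun j' => a i j') ⊓ (Finset.univ.sup fun i' => a i' j))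
        = a i j := by
      apply le_antisymm
      · rw [Finset.sup_inf_distrib_right]
        apply Finset.sup_le
        intro j' _
        rw [Finset.sup_inf_distrib_left]
        apply Finset.sup_le
        intro i' _
        by_cases h : i' = i ∧ j' = j
        · rw [h.1, h.2]
          exact inf_le_left
        · have hne2 : ((i, j') : Fin n × Fin n) ≠ (i', j) := by
            intro hh
            rw [Prod.mk.injEq] at hh
            exact h ⟨hh.1.symm, hh.2⟩
          rw [hdisj i j' i' j hne2]
          exact bot_le
      · exact le_inf (Finset.le_sup (f := fun j' => a i j') (Finset.mem_univ j))
          (Finset.le_sup (f := fun i' => a i' j) (Finset.mem_univ i))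
    rw [key]
    constructor
    · intro h
      by_contra hu
      apply hne i j
      have h1 : a i j = a i j ⊓ u.sup (fun p => a p.1 p.2) := (inf_eq_left.2 h).symm
      rw [Finset.sup_inf_distrib_left] at h1
      rw [h1]
      apply le_bot_iff.1
      apply Finset.sup_le
      intro p hp
      have hne2 : ((i, j) : Fin n × Fin n) ≠ (p.1, p.2) := by
        intro hh
        have hh2 : ((i, j) : Fin n × Fin n) = p := hh.trans (Prod.mk.eta)
        rw [← hh2] at hp
        exact hu hp
      exact (hdisj i j p.1 p.2 hne2).le
    · intro h
      exact Finset.le_sup (f := fun p : Fin n × Fin n => a p.1 p.2) h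

end Paper886
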